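/- arXiv:2502.00834 — 2 statements merged into one kernel-verified Lean document; each statement's English description precedes it below -/
import Mathlib

section
/- Let E : ℝⁿ → ℝⁿ be a continuous linear map, ε > 0, and for y ∈ ℝⁿ define w(y) ∈ ℝⁿ by w(y)ᵢ = 1/(2(|(E y)ᵢ| + ε)) and the robust operator P_robust(y) := w(y) ⊙ E(y). Then for all x, Δ ∈ ℝⁿ, the influence function of P_robust at x in direction Δ exists and equals 2ε·w(x)² ⊙ E(Δ − x), i.e., lim_{t→0⁺} (P_robust(tΔ + (1−t)x) − P_robust(x))/t has i-th coordinate 2ε·w(x)ᵢ²·(E(Δ − x))ᵢ. -/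
open Filter

private lemma deriv_g (ε : ℝ) (hε : 0 < ε) (s : ℝ) :
    HasDerivAt (fun s : ℝ => s / (2 * (|s| + ε))) (ε / (2 * (|s| + ε) ^ 2)) s := by
  rcases lt_trichotomy s 0 with hs | hs | hs
  · have hne : (2 : ℝ) * (-s + ε) ≠ 0 := ne_of_gt (by linarith)
    have h0 : -s + ε ≠ 0 := by intro h; apply hne; rw [h]; ring
    have h1 : HasDerivAt (fun u : ℝ => u / (2 * (-u + ε)))
        ((1 * (2 * (-s + ε)) - s * (2 * (-1))) / (2 * (-s + ε)) ^ 2) s := by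
      exact (hasDerivAt_id s).div ((((hasDerivAt_id s).neg.add_const ε).const_mul 2)) hne
    have heq : (fun u : ℝ => u / (2 * (|u| + ε))) =ᶠ[nhds s]
        (fun u : ℝ => u / (2 * (-u + ε))) := by
      filter_upwards [Iio_mem_nhds hs] with u hu
      rw [abs_of_neg hu]
    have := h1.congr_of_eventuallyEq heq
    refine this.congr_deriv ?_
    rw [abs_of_neg hs]
    field_simp
    ring
  · subst hs
    rw [hasDerivAt_iff_tendsto_slope]
    have habs : abs 0 = (0:ℝ) := abs_zero
    have hlim : Filter.Tendsto (fun t : ℝ => 1 / (2 * (|t| + ε)))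
        (nhds 0) (nhds (ε / (2 * (|(0:ℝ)| + ε) ^ 2))) := by
      have hc : Continuous (fun t : ℝ => 1 / (2 * (|t| + ε))) := by
        apply Continuous.div continuous_const
        · exact continuous_const.mul (continuous_abs.add continuous_const)
        · intro t; positivity
      have := hc.tendsto 0
      convert this using 2
      simp
      field_simp
    refine (hlim.mono_left nhdsWithin_le_nhds).congr' ?_
    filter_upwards [self_mem_nhdsWithin] with t ht
    have ht' : t ≠ 0 := ht
    simp only [slope_def_field, div_eq_iff, sub_zero]
    field_simp
    ring
  · have hne : (2 : ℝ) * (s + ε) ≠ 0 := by positivity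
    have h0 : s + ε ≠ 0 := by positivity
    have h1 : HasDerivAt (fun u : ℝ => u / (2 * (u + ε)))
        ((1 * (2 * (s + ε)) - s * (2 * (1 : ℝ))) / (2 * (s + ε)) ^ 2) s := by
      exact (hasDerivAt_id s).div (((hasDerivAt_id s).add_const ε).const_mul 2) hne
    have heq : (fun u : ℝ => u / (2 * (|u| + ε))) =ᶠ[nhds s]
        (fun u : ℝ => u / (2 * (u + ε))) := by
      filter_upwards [Ioi_mem_nhds hs] with u hu
      rw [abs_of_pos hu]
    have := h1.congr_of_eventuallyEq heq
    refine this.congr_deriv ?_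
    rw [abs_of_pos hs]
    field_simp
    ring

theorem influence_function_robust (n : ℕ)
    (E : (Fin n → ℝ) →L[ℝ] (Fin n → ℝ)) (ε : ℝ) (hε : 0 < ε)
    (w : (Fin n → ℝ) → Fin n → ℝ)
    (hw : ∀ y i, w y i = 1 / (2 * (|E y i| + ε)))
    (P : (Fin n → ℝ) → Fin n → ℝ)
    (hP : ∀ y i, P y i = w y i * E y i)
    (x Δ : Fin n → ℝ) :
    Filter.Tendsto (fun t : ℝ => t⁻¹ • (P (t • Δ + (1 - t) • x) - P x))
      (nhdsWithin 0 (Set.Ioi 0))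
      (nhds (fun i => 2 * ε * (w x i) ^ 2 * E (Δ - x) i)) := by
  rw [tendsto_pi_nhds]
  intro i
  set a := E x i with ha
  set b := E (Δ - x) i with hb
  have key : ∀ t : ℝ, E (t • Δ + (1 - t) • x) i = a + t * b := by
    intro t
    have h1 : (t • Δ + (1 - t) • x) = x + t • (Δ - x) := by
      module
    rw [h1, map_add, map_smul]
    simp [ha, hb]
  have hpos : 0 < |a| + ε := by positivity
  -- f t = P (y_t) i
  have hf : HasDerivAt (fun t : ℝ => (a + t * b) / (2 * (|a + t * b| + ε)))
      (ε / (2 * (|a| + ε) ^ 2) * b) 0 := by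
    have hin : HasDerivAt (fun t : ℝ => a + t * b) b 0 := by
      simpa using ((hasDerivAt_id (0:ℝ)).mul_const b).const_add a
    have := (deriv_g ε hε (a + 0 * b)).comp 0 hin
    simpa [Function.comp_def] using this
  have hval : 2 * ε * (w x i) ^ 2 * b = ε / (2 * (|a| + ε) ^ 2) * b := by
    rw [hw]
    rw [← ha]
    field_simp
  rw [hval]
  have := hasDerivAt_iff_tendsto_slope.mp hf
  have h2 := this.mono_left (nhdsWithin_mono 0 (fun t ht => ne_of_gt ht))
  refine h2.congr' ?_
  filter_upwards [self_mem_nhdsWithin] with t ht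
  have ht' : (t : ℝ) ≠ 0 := ne_of_gt ht
  have hPy : P (t • Δ + (1 - t) • x) i = (a + t * b) / (2 * (|a + t * b| + ε)) := by
    rw [hP, hw, key]
    field_simp
  have hPx : P x i = a / (2 * (|a| + ε)) := by
    rw [hP, hw, ← ha]
    field_simp
  simp only [slope_def_field, Pi.smul_apply, Pi.sub_apply, smul_eq_mul, sub_zero]
  rw [hPy, hPx]
  simp
  ring
end

section
/- Let E : ℝⁿ → ℝⁿ be a continuous linear map, ε > 0, β ∈ ℝ, and for y ∈ ℝⁿ define w(y)ᵢ = 1/(2(|(E y)ᵢ| + ε)) and the elastic operator P_elastic(y) := (β·𝟏 + (1−β)·w(y)) ⊙ E(y). Then for all x, Δ ∈ ℝⁿ, the influence function of P_elastic at x in direction Δ exists and equals (β·𝟏 + 2(1−β)·ε·w(x)²) ⊙ E(Δ − x). -/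
lemma hasDerivAt_div_abs (ε : ℝ) (hε : 0 < ε) (s₀ : ℝ) :
    HasDerivAt (fun s => s / (|s| + ε)) (ε / (|s₀| + ε) ^ 2) s₀ := by
  rcases lt_trichotomy s₀ 0 with h | h | h
  · have hne : -s₀ + ε ≠ 0 := by nlinarith
    have hd : HasDerivAt (fun s : ℝ => s / (-s + ε))
        ((1 * (-s₀ + ε) - s₀ * (-1)) / (-s₀ + ε) ^ 2) s₀ :=
      (hasDerivAt_id s₀).div ((hasDerivAt_id s₀).neg.add_const ε) hne
    have heq : (fun s : ℝ => s / (|s| + ε)) =ᶠ[nhds s₀] fun s => s / (-s + ε) := by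
      filter_upwards [Iio_mem_nhds h] with s hs
      rw [abs_of_neg hs]
    have := hd.congr_of_eventuallyEq heq
    rw [abs_of_neg h, show ε / (-s₀ + ε) ^ 2 = (1 * (-s₀ + ε) - s₀ * -1) / (-s₀ + ε) ^ 2 by ring]
    exact this
  · subst h
    rw [hasDerivAt_iff_tendsto_slope]
    have hcont : Filter.Tendsto (fun s : ℝ => (|s| + ε)⁻¹) (nhds 0) (nhds (ε / (|(0:ℝ)| + ε) ^ 2)) := by
      have h1 : Filter.Tendsto (fun s : ℝ => (|s| + ε)⁻¹) (nhds 0) (nhds ((|(0:ℝ)| + ε)⁻¹)) := by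
        apply Filter.Tendsto.inv₀
        · exact ((continuous_abs.add continuous_const).tendsto 0)
        · simp; positivity
      convert h1 using 2
      rw [abs_zero]; field_simp; ring
    refine (hcont.mono_left nhdsWithin_le_nhds).congr' ?_
    filter_upwards [self_mem_nhdsWithin] with s hs
    have hs0 : s ≠ 0 := hs
    have hne : |s| + ε ≠ 0 := by positivity
    rw [slope_def_field]
    field_simp
    ring
  · have hne : s₀ + ε ≠ 0 := by positivity
    have hd : HasDerivAt (fun s : ℝ => s / (s + ε))
        ((1 * (s₀ + ε) - s₀ * 1) / (s₀ + ε) ^ 2) s₀ :=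
      (hasDerivAt_id s₀).div ((hasDerivAt_id s₀).add_const ε) hne
    have heq : (fun s : ℝ => s / (|s| + ε)) =ᶠ[nhds s₀] fun s => s / (s + ε) := by
      filter_upwards [Ioi_mem_nhds h] with s hs
      rw [abs_of_pos hs]
    have := hd.congr_of_eventuallyEq heq
    rw [abs_of_pos h, show ε / (s₀ + ε) ^ 2 = (1 * (s₀ + ε) - s₀ * 1) / (s₀ + ε) ^ 2 by ring]
    exact this

theorem influence_function_elastic (n : ℕ)
    (E : (Fin n → ℝ) →L[ℝ] (Fin n → ℝ)) (ε β : ℝ) (hε : 0 < ε)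
    (w : (Fin n → ℝ) → Fin n → ℝ)
    (hw : ∀ y i, w y i = 1 / (2 * (|E y i| + ε)))
    (P : (Fin n → ℝ) → Fin n → ℝ)
    (hP : ∀ y i, P y i = (β * 1 + (1 - β) * w y i) * E y i)
    (x Δ : Fin n → ℝ) :
    Filter.Tendsto (fun t : ℝ => t⁻¹ • (P (t • Δ + (1 - t) • x) - P x))
      (nhdsWithin 0 (Set.Ioi 0))
      (nhds (fun i => (β * 1 + 2 * (1 - β) * ε * (w x i) ^ 2) * E (Δ - x) i)) := by
  rw [tendsto_pi_nhds]
  intro i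
  set a : ℝ := E x i with ha
  set b : ℝ := E (Δ - x) i with hb
  have hane : |a| + ε ≠ 0 := by positivity
  -- the one-dimensional curve
  set φ : ℝ → ℝ := fun t => β * (a + t * b) + (1 - β) / 2 * ((a + t * b) / (|a + t * b| + ε))
    with hφ
  have hE : ∀ t : ℝ, E (t • Δ + (1 - t) • x) i = a + t * b := by
    intro t
    have : E (t • Δ + (1 - t) • x) = t • E Δ + (1 - t) • E x := by
      rw [map_add, map_smul, map_smul]
    rw [this]
    have hbb : b = E Δ i - E x i := by rw [hb, map_sub]; simp
    simp [Pi.add_apply, Pi.smul_apply, smul_eq_mul, hbb, ha]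
    ring
  have hPφ : ∀ t : ℝ, P (t • Δ + (1 - t) • x) i = φ t := by
    intro t
    rw [hP, hw, hE, hφ]
    have hne : |a + t * b| + ε ≠ 0 := by positivity
    field_simp
  have hPx : P x i = φ 0 := by
    rw [hP, hw, hφ]
    simp only [zero_mul, add_zero]
    field_simp
    ring
  -- derivative of the curve
  have hc : HasDerivAt (fun t : ℝ => a + t * b) b 0 := by
    simpa using ((hasDerivAt_id (0:ℝ)).mul_const b).const_add a
  have hg : HasDerivAt (fun s : ℝ => s / (|s| + ε)) (ε / (|a| + ε) ^ 2) (a + 0 * b) := by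
    simpa using hasDerivAt_div_abs ε hε a
  have hcomp : HasDerivAt (fun t : ℝ => (a + t * b) / (|a + t * b| + ε))
      (ε / (|a| + ε) ^ 2 * b) 0 := by have := hg.comp 0 hc; exact this
  have hφd : HasDerivAt φ (β * b + (1 - β) / 2 * (ε / (|a| + ε) ^ 2 * b)) 0 :=
    (hc.const_mul β).add (hcomp.const_mul ((1 - β) / 2))
  have hval : (β * 1 + 2 * (1 - β) * ε * (w x i) ^ 2) * b
      = β * b + (1 - β) / 2 * (ε / (|a| + ε) ^ 2 * b) := by
    rw [hw]
    field_simp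
    ring
  rw [hval]
  have hslope := hasDerivAt_iff_tendsto_slope.mp hφd
  have hmono : nhdsWithin (0:ℝ) (Set.Ioi 0) ≤ nhdsWithin (0:ℝ) {(0:ℝ)}ᶜ :=
    nhdsWithin_mono 0 (fun t ht => ne_of_gt ht)
  refine ((hslope.mono_left hmono).congr' ?_)
  filter_upwards [self_mem_nhdsWithin] with t ht
  simp only [Pi.smul_apply, Pi.sub_apply, smul_eq_mul]
  rw [hPφ, hPx, slope_def_field, sub_zero, div_eq_inv_mul]
end
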